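/- Let μ* : PMF PlayerStrat be the player mixed strategy that chooses the initial door d uniformly at random among the three doors and always switches (s is constantly true). Then for every host mixed strategy ν : PMF HostStrat, the player's win probability is exactly W(μ*, ν) = 2/3. -/

import Mathlib

open scoped ENNReal

/-- Doors of the Monty Hall game. -/
abbrev Door := Fin 3

/-- A host pure strategy: a pair `(c, g)` where `c` is the door hiding the car and
`g ≠ c` is the door the host opens if the player initially picks door `c`. -/
abbrev HostStrat := {p : Door × Door // p.2 ≠ p.1}

/-- A player pure strategy: an initially chosen door `d` together with a function
`s` telling, for each door `j` the host might open, whether the player switches. -/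
abbrev PlayerStrat := Door × (Door → Bool)

/-- For two distinct doors `a b : Fin 3`, `thirdDoor a b = -(a + b)` is the unique
door distinct from both `a` and `b` (since `0 + 1 + 2 = 0` in `Fin 3`). -/
def thirdDoor (a b : Door) : Door := -(a + b)

/-- The door opened by the host: `g` if the player initially picked the car door `c`,
otherwise the unique door distinct from both the player's door `d` and `c`. -/
def openedDoor (d : Door) (h : HostStrat) : Door :=
  if d = h.val.1 then h.val.2 else thirdDoor d h.val.1

/-- The player's final door: the unique door distinct from the initially chosen door
and the opened door if the player switches, and the initially chosen door otherwise. -/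
def finalDoor (p : PlayerStrat) (h : HostStrat) : Door :=
  if p.2 (openedDoor p.1 h) then thirdDoor p.1 (openedDoor p.1 h) else p.1

/-- The player wins iff his final door hides the car. -/
def playerWins (p : PlayerStrat) (h : HostStrat) : Prop := finalDoor p h = h.val.1

instance (p : PlayerStrat) (h : HostStrat) : Decidable (playerWins p h) :=
  inferInstanceAs (Decidable (finalDoor p h = h.val.1))

/-- The win probability of player mixed strategy `μ` against host mixed strategy `ν`:
the expectation, under the product of `μ` and `ν`, of the indicator that the player
wins. -/
noncomputable def winProb (μ : PMF PlayerStrat) (ν : PMF HostStrat) : ℝ≥0∞ :=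
  ∑' p : PlayerStrat, ∑' h : HostStrat,
    μ p * ν h * (if playerWins p h then 1 else 0)

/-- If the player chooses his initial door uniformly at random and always switches,
then against every host mixed strategy his win probability is exactly `2/3`. -/

lemma wins_iff (d : Door) (h : HostStrat) :
    playerWins (d, fun _ => true) h ↔ d ≠ h.val.1 := by
  obtain ⟨⟨c, g⟩, hg⟩ := h
  revert hg; revert d c g
  decide

lemma sum_indicator (c : Door) :
    (∑ d : Door, (if d ≠ c then (1 : ℝ≥0∞) else 0)) = 2 := by
  fin_cases c <;> simp [Fin.sum_univ_three] <;> norm_num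

theorem monty_hall_player_minimax
    (μ : PMF PlayerStrat)
    (hμ : ∀ x : PlayerStrat,
      μ x = if x.2 = (fun _ => true) then 1 / 3 else 0)
    (ν : PMF HostStrat) :
    winProb μ ν = 2 / 3 := by
  have h1 : winProb μ ν = ∑ p : PlayerStrat, ∑ h : HostStrat,
      μ p * ν h * (if playerWins p h then 1 else 0) := by
    simp [winProb, tsum_fintype]
  rw [h1]
  rw [Fintype.sum_prod_type]
  have h2 : ∀ d : Door, (∑ s : Door → Bool, ∑ h : HostStrat,
      μ (d, s) * ν h * (if playerWins (d, s) h then 1 else 0))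
      = ∑ h : HostStrat, (1/3) * ν h * (if playerWins (d, fun _ => true) h then 1 else 0) := by
    intro d
    rw [Finset.sum_comm]
    refine Finset.sum_congr rfl fun h _ => ?_
    have : ∀ s : Door → Bool, μ (d, s) * ν h * (if playerWins (d, s) h then 1 else 0)
        = if s = (fun _ => true) then
            (1/3) * ν h * (if playerWins (d, fun _ => true) h then 1 else 0) else 0 := by
      intro s
      rw [hμ]
      by_cases hs : s = (fun _ => true) <;> simp [hs]
    simp only [this, Finset.sum_ite_eq', Finset.mem_univ, if_true]
  simp only [h2]
  rw [Finset.sum_comm]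
  have h3 : ∀ h : HostStrat, (∑ d : Door,
      (1/3 : ℝ≥0∞) * ν h * (if playerWins (d, fun _ => true) h then 1 else 0))
      = ν h * (2/3) := by
    intro h
    rw [← Finset.mul_sum]
    have : (∑ d : Door, (if playerWins (d, fun _ => true) h then (1:ℝ≥0∞) else 0)) = 2 := by
      simp only [wins_iff]
      exact sum_indicator h.val.1
    rw [this]
    rw [mul_comm]
    rw [show (2:ℝ≥0∞)/3 = 2 * (1/3) by
      rw [ENNReal.div_eq_inv_mul, one_div, mul_comm]]
    ring
  simp only [h3]
  rw [← Finset.sum_mul, ← tsum_fintype (L := SummationFilter.unconditional _), ν.tsum_coe, one_mul]
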